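/- Let 1 ≤ α ≤ 2, β = α/(α-1), and a > 0. For n ≥ 1 and v = (v₁,…,vₙ) ∈ ℝⁿ with Σᵢ vᵢ² ≤ 1, and any t > 0, one has Σᵢ H_{a,α}(t vᵢ) ≤ H_{a,α}(t). -/

import Mathlib

open Real

/-- The modified cost function: quadratic on `[-a,a]`, power-`p` growth outside. -/
noncomputable def Lmod (a p : ℝ) (x : ℝ) : ℝ :=
  if |x| ≤ a then x ^ 2 / 2
  else a ^ (2 - p) * |x| ^ p / p + a ^ 2 * (p - 2) / (2 * p)

/-- The modified energy function `H_{a,α}`, with values in `EReal` so as to cover the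
case `α = 1` where it is `+∞` outside `[-a,a]`; for `α > 1` it is `Lmod a β` with
`β = α/(α-1)` the conjugate exponent. -/
noncomputable def Hmod (a α β : ℝ) (x : ℝ) : EReal :=
  if α = 1 then (if |x| ≤ a then ((x ^ 2 / 2 : ℝ) : EReal) else ⊤)
  else ((Lmod a β x : ℝ) : EReal)

/-- Core monotonicity inequality, in multiplied-out form. -/
lemma key_ineq (γ u s : ℝ) (hγ : 0 ≤ γ) (hu : 1 ≤ u) (hus : u ≤ s) :
    u ^ γ * u ^ 2 * s ^ 2 + γ / 2 * s ^ 2 ≤ s ^ γ * s ^ 2 * u ^ 2 + γ / 2 * u ^ 2 := by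
  have hu0 : (0:ℝ) < u := by linarith
  have hs0 : (0:ℝ) < s := by linarith
  set L := Real.log s - Real.log u with hL
  have hL0 : 0 ≤ L := by
    have h := Real.log_le_log hu0 hus
    rw [hL]
    linarith
  -- Step 1 : u^γ + γ*L ≤ s^γ
  have h1 : u ^ γ + γ * L ≤ s ^ γ := by
    have hratio : (1:ℝ) ≤ s / u := (one_le_div hu0).2 hus
    have hexp : 1 + γ * L ≤ Real.exp (γ * L) := by
      linarith [Real.add_one_le_exp (γ * L)]
    have hsu : (s / u) ^ γ = Real.exp (γ * L) := by
      rw [Real.rpow_def_of_pos (by positivity), Real.log_div hs0.ne' hu0.ne']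
      ring_nf
      congr 1; rw [hL]; ring
    have hs_eq : s ^ γ = u ^ γ * (s / u) ^ γ := by
      rw [← Real.mul_rpow hu0.le (by positivity)]
      congr 1
      field_simp
    have hu1 : (1:ℝ) ≤ u ^ γ := by
      calc (1:ℝ) = 1 ^ γ := (Real.one_rpow γ).symm
      _ ≤ u ^ γ := Real.rpow_le_rpow zero_le_one hu hγ
    have hγL : 0 ≤ γ * L := mul_nonneg hγ hL0
    nlinarith [hs_eq, hsu, hexp, hu1, hγL]
  -- Step 2 : (u^2)⁻¹ - (s^2)⁻¹ ≤ 2*L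
  have h2 : (u ^ 2)⁻¹ - (s ^ 2)⁻¹ ≤ 2 * L := by
    have hus2 : (u / s) ^ 2 = Real.exp (-(2 * L)) := by
      have h : u / s = Real.exp (-L) := by
        rw [hL, neg_sub, Real.exp_sub, Real.exp_log hu0, Real.exp_log hs0]
      rw [h, sq, ← Real.exp_add]
      ring_nf
    have hexp2 : 1 - Real.exp (-(2 * L)) ≤ 2 * L := by
      linarith [Real.add_one_le_exp (-(2 * L))]
    have heq : (u ^ 2)⁻¹ - (s ^ 2)⁻¹ = (u ^ 2)⁻¹ * (1 - (u / s) ^ 2) := by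
      field_simp
    have hinv1 : (u ^ 2)⁻¹ ≤ 1 := inv_le_one_of_one_le₀ (by nlinarith)
    have hx0 : 0 ≤ 1 - (u / s) ^ 2 := by
      have : u / s ≤ 1 := (div_le_one hs0).2 hus
      nlinarith [div_nonneg hu0.le hs0.le]
    calc (u ^ 2)⁻¹ - (s ^ 2)⁻¹ = (u ^ 2)⁻¹ * (1 - (u / s) ^ 2) := heq
      _ ≤ 1 * (1 - (u / s) ^ 2) := mul_le_mul_of_nonneg_right hinv1 hx0
      _ = 1 - (u / s) ^ 2 := one_mul _
      _ = 1 - Real.exp (-(2 * L)) := by rw [hus2]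
      _ ≤ 2 * L := hexp2
  -- combine: multiply the inverse form by u^2*s^2
  have horig : u ^ γ + γ / 2 * (u ^ 2)⁻¹ ≤ s ^ γ + γ / 2 * (s ^ 2)⁻¹ := by
    nlinarith [h1, h2, hγ]
  have hmul := mul_le_mul_of_nonneg_right horig (show (0:ℝ) ≤ u ^ 2 * s ^ 2 by positivity)
  have h3 : (u ^ 2)⁻¹ * (u ^ 2 * s ^ 2) = s ^ 2 := by field_simp
  have h4 : (s ^ 2)⁻¹ * (u ^ 2 * s ^ 2) = u ^ 2 := by field_simp
  nlinarith [hmul, h3, h4]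

/-- Scaled version: monotonicity of `f(x)/x²` where `f` is the power part of `Lmod`. -/
lemma key_scaled (β a x y : ℝ) (hβ : 2 ≤ β) (ha : 0 < a) (hx : a ≤ x) (hxy : x ≤ y) :
    y ^ 2 * (a ^ (2 - β) * x ^ β / β + a ^ 2 * (β - 2) / (2 * β)) ≤
      x ^ 2 * (a ^ (2 - β) * y ^ β / β + a ^ 2 * (β - 2) / (2 * β)) := by
  have hβ0 : (0:ℝ) < β := by linarith
  have hx0 : (0:ℝ) < x := lt_of_lt_of_le ha hx
  have hy0 : (0:ℝ) < y := lt_of_lt_of_le hx0 hxy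
  have hu : (1:ℝ) ≤ x / a := (one_le_div ha).2 hx
  have hus : x / a ≤ y / a := div_le_div_of_nonneg_right hxy ha.le
  have K := key_ineq (β - 2) (x / a) (y / a) (by linarith) hu hus
  have hub : (x / a) ^ (β - 2) * (x / a) ^ 2 = (x / a) ^ β := by
    rw [← Real.rpow_natCast (x / a) 2, ← Real.rpow_add (by positivity)]
    norm_num
  have hsb : (y / a) ^ (β - 2) * (y / a) ^ 2 = (y / a) ^ β := by
    rw [← Real.rpow_natCast (y / a) 2, ← Real.rpow_add (by positivity)]
    norm_num
  rw [hub, hsb] at K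
  -- relate a^(2-β) * x^β with a^2 * (x/a)^β
  have e2 : a ^ ((2:ℝ)) = a ^ (2:ℕ) := by
    rw [← Real.rpow_natCast a 2]; norm_num
  have e1 : ∀ z : ℝ, 0 < z → a ^ (2 - β) * z ^ β = a ^ 2 * (z / a) ^ β := by
    intro z hz
    rw [Real.div_rpow hz.le ha.le, Real.rpow_sub ha, e2]
    field_simp
  have eL : y ^ 2 * (a ^ (2 - β) * x ^ β / β + a ^ 2 * (β - 2) / (2 * β)) =
      a ^ 4 / β * ((x / a) ^ β * (y / a) ^ 2 + (β - 2) / 2 * (y / a) ^ 2) := by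
    rw [e1 x hx0]
    field_simp
  have eR : x ^ 2 * (a ^ (2 - β) * y ^ β / β + a ^ 2 * (β - 2) / (2 * β)) =
      a ^ 4 / β * ((y / a) ^ β * (x / a) ^ 2 + (β - 2) / 2 * (x / a) ^ 2) := by
    rw [e1 y hy0]
    field_simp
  rw [eL, eR]
  have K' : (x / a) ^ β * (y / a) ^ 2 + (β - 2) / 2 * (y / a) ^ 2 ≤
      (y / a) ^ β * (x / a) ^ 2 + (β - 2) / 2 * (x / a) ^ 2 := by
    nlinarith [K]
  exact mul_le_mul_of_nonneg_left K' (by positivity)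

lemma Lmod_nonneg {β a : ℝ} (hβ : 2 ≤ β) (ha : 0 < a) (x : ℝ) : 0 ≤ Lmod a β x := by
  unfold Lmod
  split_ifs with h
  · positivity
  · have h1 : (0:ℝ) ≤ a ^ (2 - β) * |x| ^ β / β := by positivity
    have h2 : (0:ℝ) ≤ a ^ 2 * (β - 2) / (2 * β) := by
      apply div_nonneg
      · exact mul_nonneg (by positivity) (by linarith)
      · linarith
    linarith

lemma Lmod_mul_le {β a t v : ℝ} (hβ : 2 ≤ β) (ha : 0 < a) (ht : 0 < t) (hv : |v| ≤ 1) :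
    Lmod a β (t * v) ≤ v ^ 2 * Lmod a β t := by
  have hβ0 : (0:ℝ) < β := by linarith
  have habs : |t * v| = t * |v| := by rw [abs_mul, abs_of_pos ht]
  have htv : t * |v| ≤ t := by nlinarith [abs_nonneg v]
  unfold Lmod
  rw [abs_of_pos ht]
  split_ifs with h1 h2 h2
  · have : (t * v) ^ 2 / 2 = v ^ 2 * (t ^ 2 / 2) := by ring
    linarith
  · -- |t*v| ≤ a but a < t
    have hat : a ≤ t := (not_le.1 h2).le
    have K := key_scaled β a a t hβ ha le_rfl hat
    have e : a ^ (2 - β) * a ^ β = a ^ 2 := by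
      rw [← Real.rpow_add ha, ← Real.rpow_natCast a 2]
      norm_num
    rw [e] at K
    -- K : t^2 * (a^2/β + a^2*(β-2)/(2β)) ≤ a^2 * (…) ; note a^2/β + a^2*(β-2)/(2β) = a^2/2
    have hK2 : t ^ 2 / 2 ≤ a ^ (2 - β) * t ^ β / β + a ^ 2 * (β - 2) / (2 * β) := by
      have ha2 : (0:ℝ) < a ^ 2 := by positivity
      have heq : t ^ 2 * (a ^ 2 / β + a ^ 2 * (β - 2) / (2 * β)) = a ^ 2 * (t ^ 2 / 2) := by
        field_simp
        ring
      rw [heq] at K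
      exact le_of_mul_le_mul_left K ha2
    have hm := mul_le_mul_of_nonneg_left hK2 (sq_nonneg v)
    have : (t * v) ^ 2 / 2 = v ^ 2 * (t ^ 2 / 2) := by ring
    linarith
  · -- a < |t*v| but t ≤ a : impossible
    exfalso
    rw [habs] at h1
    push_neg at h1
    nlinarith [abs_nonneg v]
  · -- a < t*|v| ≤ t
    rw [habs] at h1 ⊢
    push_neg at h1 h2
    have K := key_scaled β a (t * |v|) t hβ ha h1.le htv
    have hv2 : v ^ 2 * t ^ 2 = (t * |v|) ^ 2 := by
      rw [mul_pow, sq_abs]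
      ring
    rw [← hv2] at K
    nlinarith [K, mul_pos ht ht]

lemma coe_sum_ereal {ι : Type*} (s : Finset ι) (f : ι → ℝ) :
    ∑ i ∈ s, ((f i : ℝ) : EReal) = ((∑ i ∈ s, f i : ℝ) : EReal) := by
  classical
  induction s using Finset.induction_on with
  | empty => simp
  | insert x s h ih =>
    rw [Finset.sum_insert h, Finset.sum_insert h, ih, EReal.coe_add]

theorem stmt_18 (α β a : ℝ) (hα : 1 ≤ α) (hα2 : α ≤ 2) (hβ : β = α / (α - 1))
    (ha : 0 < a) (n : ℕ) (hn : 1 ≤ n) (v : Fin n → ℝ) (hv : ∑ i, v i ^ 2 ≤ 1)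
    (t : ℝ) (ht : 0 < t) :
    ∑ i, Hmod a α β (t * v i) ≤ Hmod a α β t := by
  have hvi : ∀ i, |v i| ≤ 1 := by
    intro i
    have h1 : v i ^ 2 ≤ ∑ j, v j ^ 2 :=
      Finset.single_le_sum (fun j _ => sq_nonneg (v j)) (Finset.mem_univ i)
    exact (sq_le_one_iff_abs_le_one (v i)).1 (le_trans h1 hv)
  unfold Hmod
  by_cases hα1 : α = 1
  · simp only [if_pos hα1]
    by_cases hta : |t| ≤ a
    · have htva : ∀ i, |t * v i| ≤ a := by
        intro i
        rw [abs_mul]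
        calc |t| * |v i| ≤ |t| * 1 := mul_le_mul_of_nonneg_left (hvi i) (abs_nonneg t)
          _ = |t| := mul_one _
          _ ≤ a := hta
      rw [if_pos hta]
      have hsum : ∑ i, (if |t * v i| ≤ a then (((t * v i) ^ 2 / 2 : ℝ) : EReal) else ⊤) =
          ∑ i, (((t * v i) ^ 2 / 2 : ℝ) : EReal) :=
        Finset.sum_congr rfl fun i _ => if_pos (htva i)
      rw [hsum, coe_sum_ereal]
      rw [EReal.coe_le_coe_iff]
      have heq : ∑ i, (t * v i) ^ 2 / 2 = t ^ 2 / 2 * ∑ i, v i ^ 2 := by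
        rw [Finset.mul_sum]
        exact Finset.sum_congr rfl fun i _ => by ring
      rw [heq]
      nlinarith [sq_nonneg t]
    · rw [if_neg hta]
      exact le_top
  · simp only [if_neg hα1]
    have hαgt : 1 < α := lt_of_le_of_ne hα (Ne.symm hα1)
    have hβ2 : 2 ≤ β := by
      rw [hβ, le_div_iff₀ (by linarith)]
      linarith
    rw [coe_sum_ereal, EReal.coe_le_coe_iff]
    calc ∑ i, Lmod a β (t * v i) ≤ ∑ i, v i ^ 2 * Lmod a β t :=
          Finset.sum_le_sum fun i _ => Lmod_mul_le hβ2 ha ht (hvi i)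
      _ = (∑ i, v i ^ 2) * Lmod a β t := by rw [Finset.sum_mul]
      _ ≤ 1 * Lmod a β t := mul_le_mul_of_nonneg_right hv (Lmod_nonneg hβ2 ha t)
      _ = Lmod a β t := one_mul _
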